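/- Let S be a semigroup, σ : S → S an involutive automorphism, and μ a finite linear combination of Dirac measures at central points, given by a finite index set I, constants c_i ∈ ℂ, and elements z_i ∈ Z(S). Suppose f, g : S → ℂ satisfy ∑_{i∈I} c_i f(x y z_i) − ∑_{i∈I} c_i f(σ(y) x z_i) = 2 f(x) g(y) for all x, y ∈ S, with f ≠ 0 and g ≠ 0, and suppose ∑_{i∈I} c_i g(z_i) ≠ 0. Define F(x) := (∑_{i∈I} c_i f(x z_i)) / (∑_{j∈I} c_j g(z_j)) and G₁(x) := (∑_{i∈I} c_i g(x z_i) − ∑_{i∈I} c_i g(x σ(z_i))) / (2 ∑_{j∈I} c_j g(z_j)). Then F ≠ 0, G₁ ≠ 0, and F(xy) + F(σ(y)x) = 2 F(x) G₁(y) for all x, y ∈ S. -/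

import Mathlib

/-- Lemma: if `(f, g)` solves the Van Vleck–Wilson equation with `f ≠ 0`, `g ≠ 0`
and `∑ᵢ cᵢ g(zᵢ) ≠ 0`, then with
`F(x) = (∑ᵢ cᵢ f(x zᵢ)) / ∑ⱼ cⱼ g(zⱼ)` and
`G₁(x) = (∑ᵢ cᵢ g(x zᵢ) - ∑ᵢ cᵢ g(x σ(zᵢ))) / (2 ∑ⱼ cⱼ g(zⱼ))`
one has `F ≠ 0`, `G₁ ≠ 0` and `F(xy) + F(σ(y)x) = 2 F(x) G₁(y)`. -/
theorem van_vleck_wilson_reduction {S : Type*} [Semigroup S] (σ : S → S)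
    (hσmul : ∀ x y : S, σ (x * y) = σ x * σ y) (hσinv : ∀ x : S, σ (σ x) = x)
    {ι : Type*} [Fintype ι] (c : ι → ℂ) (z : ι → S)
    (hz : ∀ (i : ι) (x : S), x * z i = z i * x)
    (f g : S → ℂ) (hf : f ≠ 0) (hg : g ≠ 0)
    (heq : ∀ x y : S,
      (∑ i, c i * f (x * y * z i)) - (∑ i, c i * f (σ y * x * z i)) = 2 * f x * g y)
    (hgz : (∑ j, c j * g (z j)) ≠ 0)
    (F G₁ : S → ℂ)
    (hF : ∀ x : S, F x = (∑ i, c i * f (x * z i)) / (∑ j, c j * g (z j)))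
    (hG₁ : ∀ x : S, G₁ x =
      ((∑ i, c i * g (x * z i)) - (∑ i, c i * g (x * σ (z i)))) /
        (2 * ∑ j, c j * g (z j))) :
    F ≠ 0 ∧ G₁ ≠ 0 ∧ ∀ x y : S, F (x * y) + F (σ y * x) = 2 * F x * G₁ y := by
  have hzσ : ∀ (i : ι) (x : S), x * σ (z i) = σ (z i) * x := by
    intro i x
    have h1 : x * σ (z i) = σ (σ x * z i) := by rw [hσmul, hσinv]
    have h2 : σ (z i) * x = σ (z i * σ x) := by rw [hσmul, hσinv]
    rw [h1, h2, hz]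
  set D := ∑ j, c j * g (z j) with hD
  have combine : ∀ (u v w : ι → ℂ), (∀ j, u j - v j = w j) →
      (∑ j, c j * u j) - (∑ j, c j * v j) = ∑ j, c j * w j := by
    intro u v w h
    rw [← Finset.sum_sub_distrib]
    exact Finset.sum_congr rfl fun j _ => by rw [← h j]; ring
  -- Step 1
  have step1 : ∀ x : S,
      (∑ j, c j * (∑ i, c i * f (x * z j * z i))) -
      (∑ j, c j * (∑ i, c i * f (x * σ (z j) * z i))) = 2 * D * f x := by
    intro x
    have h := combine _ _ (fun j => 2 * f x * g (z j)) (fun j => by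
      have h := heq x (z j)
      rw [← hzσ j x] at h
      exact h)
    rw [h, hD, Finset.mul_sum, Finset.sum_mul]
    exact Finset.sum_congr rfl fun j _ => by ring
  -- Step 2
  have step2 : ∀ x y : S,
      (∑ j, c j * (∑ i, c i * f (x * y * z j * z i))) -
      (∑ j, c j * (∑ i, c i * f (σ y * x * σ (z j) * z i))) =
      2 * f x * (∑ j, c j * g (y * z j)) := by
    intro x y
    have h := combine _ _ (fun j => 2 * f x * g (y * z j)) (fun j => by
      have h := heq x (y * z j)
      have e1 : x * (y * z j) = x * y * z j := (mul_assoc _ _ _).symm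
      have e2 : σ (y * z j) * x = σ y * x * σ (z j) := by
        rw [hσmul, mul_assoc, ← hzσ, ← mul_assoc]
      rw [e1, e2] at h
      exact h)
    rw [h, Finset.mul_sum]
    exact Finset.sum_congr rfl fun j _ => by ring
  -- Step 3
  have step3 : ∀ x y : S,
      (∑ j, c j * (∑ i, c i * f (x * y * σ (z j) * z i))) -
      (∑ j, c j * (∑ i, c i * f (σ y * x * z j * z i))) =
      2 * f x * (∑ j, c j * g (y * σ (z j))) := by
    intro x y
    have h := combine _ _ (fun j => 2 * f x * g (y * σ (z j))) (fun j => by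
      have h := heq x (y * σ (z j))
      have e1 : x * (y * σ (z j)) = x * y * σ (z j) := (mul_assoc _ _ _).symm
      have e2 : σ (y * σ (z j)) * x = σ y * x * z j := by
        rw [hσmul, hσinv, mul_assoc, ← hz, ← mul_assoc]
      rw [e1, e2] at h
      exact h)
    rw [h, Finset.mul_sum]
    exact Finset.sum_congr rfl fun j _ => by ring
  -- key identity
  have key : ∀ x y : S, D * (f (x * y) + f (σ y * x)) =
      f x * ((∑ i, c i * g (y * z i)) - (∑ i, c i * g (y * σ (z i)))) := by
    intro x y
    linear_combination (step2 x y - step3 x y - step1 (x * y) - step1 (σ y * x)) / 2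
  -- key identity for μf
  have key2 : ∀ x y : S,
      D * ((∑ i, c i * f (x * y * z i)) + (∑ i, c i * f (σ y * x * z i))) =
      (∑ i, c i * f (x * z i)) *
        ((∑ i, c i * g (y * z i)) - (∑ i, c i * g (y * σ (z i)))) := by
    intro x y
    rw [← Finset.sum_add_distrib, Finset.mul_sum, Finset.sum_mul]
    refine Finset.sum_congr rfl fun i _ => ?_
    have h := key (x * z i) y
    have e1 : x * z i * y = x * y * z i := by rw [mul_assoc, ← hz, ← mul_assoc]
    have e2 : σ y * (x * z i) = σ y * x * z i := (mul_assoc _ _ _).symm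
    rw [e1, e2] at h
    linear_combination c i * h
  have h2D : (2 : ℂ) * D ≠ 0 := mul_ne_zero two_ne_zero hgz
  refine ⟨?_, ?_, ?_⟩
  · -- F ≠ 0
    intro hF0
    apply hf
    funext x
    have hmf0 : ∀ u : S, (∑ i, c i * f (u * z i)) = 0 := by
      intro u
      have h := congrFun hF0 u
      rw [hF u] at h
      simp only [Pi.zero_apply] at h
      exact (div_eq_zero_iff.mp h).resolve_right hgz
    have h := step1 x
    simp only [hmf0, mul_zero, Finset.sum_const_zero, sub_zero, sub_self] at h
    have h3 : (2 * D) * f x = 0 := by linear_combination -h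
    have := (mul_eq_zero.mp h3).resolve_left h2D
    simpa using this
  · -- G₁ ≠ 0
    intro hG0
    have hmg : ∀ u : S, (∑ i, c i * g (u * z i)) = ∑ i, c i * g (u * σ (z i)) := by
      intro u
      have h := congrFun hG0 u
      rw [hG₁ u] at h
      simp only [Pi.zero_apply] at h
      exact sub_eq_zero.mp ((div_eq_zero_iff.mp h).resolve_right h2D)
    have hanti : ∀ x y : S, f (σ y * x) = - f (x * y) := by
      intro x y
      have h := key x y
      rw [hmg y, sub_self, mul_zero] at h
      have h' := (mul_eq_zero.mp h).resolve_left hgz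
      linear_combination h'
    have hnegsum : ∀ x y : S,
        (∑ i, c i * f (σ y * x * z i)) = - ∑ i, c i * f (x * y * z i) := by
      intro x y
      rw [← Finset.sum_neg_distrib]
      refine Finset.sum_congr rfl fun i _ => ?_
      have e2 : σ y * x * z i = σ y * (x * z i) := mul_assoc _ _ _
      have e1 : x * z i * y = x * y * z i := by rw [mul_assoc, ← hz, ← mul_assoc]
      rw [e2, hanti (x * z i) y, e1]
      ring
    have hP : ∀ x y : S, (∑ i, c i * f (x * y * z i)) = f x * g y := by
      intro x y
      have h := heq x y
      rw [hnegsum x y] at h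
      linear_combination h / 2
    have hQ : ∀ x y : S, f (σ y) * g x = -(f x * g y) := by
      intro x y
      have h1 := hP (σ y) x
      have h2 := hnegsum x y
      rw [hP x y] at h2
      rw [← h1]
      exact h2
    obtain ⟨y0, hy0⟩ : ∃ y0, g y0 ≠ 0 := by
      by_contra h
      push_neg at h
      exact hg (funext fun y => by simpa using h y)
    set l := -f (σ y0) / g y0 with hl
    have hfg : ∀ x, f x = l * g x := by
      intro x
      have h := hQ x y0
      rw [hl]
      field_simp
      linear_combination h
    have hl0 : l ≠ 0 := by
      intro h0
      apply hf
      funext x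
      simpa [h0] using hfg x
    have hR : ∀ y, g (σ y) = - g y := by
      intro y
      have h := hQ y0 y
      rw [hfg (σ y), hfg y0] at h
      have hne : l * g y0 ≠ 0 := mul_ne_zero hl0 hy0
      apply mul_right_cancel₀ hne
      linear_combination h
    have hS : ∀ x y : S, (∑ i, c i * g (x * y * z i)) = g x * g y := by
      intro x y
      have h := hP x y
      rw [hfg x] at h
      rw [show (∑ i, c i * f (x * y * z i)) = l * ∑ i, c i * g (x * y * z i) from by
        rw [Finset.mul_sum]; exact Finset.sum_congr rfl fun i _ => by rw [hfg]; ring] at h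
      exact mul_left_cancel₀ hl0 (by linear_combination h)
    have hT1 := hS (σ y0) (σ y0)
    rw [hR y0] at hT1
    have hT2 : (∑ i, c i * g (σ y0 * σ y0 * z i)) = -(g y0 * g y0) := by
      calc (∑ i, c i * g (σ y0 * σ y0 * z i))
          = ∑ i, c i * -g (y0 * y0 * σ (z i)) := by
            refine Finset.sum_congr rfl fun i _ => ?_
            have e3 : σ y0 * σ y0 * z i = σ (y0 * y0 * σ (z i)) := by
              rw [hσmul, hσmul, hσinv]
            rw [e3, hR]
        _ = -(∑ i, c i * g (y0 * y0 * σ (z i))) := by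
            rw [← Finset.sum_neg_distrib]
            exact Finset.sum_congr rfl fun i _ => by ring
        _ = -(∑ i, c i * g (y0 * y0 * z i)) := by rw [hmg (y0 * y0)]
        _ = -(g y0 * g y0) := by rw [hS y0 y0]
    rw [hT2] at hT1
    have hzz : g y0 * g y0 = 0 := by linear_combination -hT1 / 2
    exact hy0 (mul_self_eq_zero.mp hzz)
  · -- main functional equation
    intro x y
    rw [hF, hF, hF, hG₁]
    have h := key2 x y
    field_simp
    linear_combination h
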